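/- Let F ∈ ℝ^{j×n}, J ∈ ℝ^{q_M×n}, G_L ∈ ℝ^{n×q_L} with ‖F G_L‖ < 1, and let α > 0 satisfy ‖Fx‖ ≤ α‖Jx‖ for all x ∈ ℝⁿ. Set κ := α‖J G_L‖ / (1 − ‖F G_L‖). If e₁, e₂ ∈ ℝⁿ and φ ∈ ℝ^{q_L} satisfy ‖φ‖ ≤ ‖F(e₁ + G_L φ + e₂)‖, then ‖J(e₁ + G_L φ)‖ ≤ (1 + κ)‖J e₁‖ + κ‖J e₂‖. -/

import Mathlib

open Matrix Set Filter

/-- Euclidean norm of a vector in `ℝ^ι`. -/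
noncomputable def vecEnorm {ι : Type*} [Fintype ι] (x : ι → ℝ) : ℝ :=
  Real.sqrt (x ⬝ᵥ x)

/-- Spectral (Euclidean operator) norm of a real matrix. -/
noncomputable def matNorm {ι κ : Type*} [Fintype ι] [Fintype κ] [DecidableEq κ]
    (M : Matrix ι κ ℝ) : ℝ :=
  ‖LinearMap.toContinuousLinearMap (Matrix.toEuclideanLin M)‖

/-- Largest eigenvalue of a (symmetric) real matrix, as the supremum of its eigenvalues. -/
noncomputable def lamMax {q : Type*} [Fintype q] (M : Matrix q q ℝ) : ℝ :=
  sSup {r : ℝ | ∃ v : q → ℝ, v ≠ 0 ∧ M *ᵥ v = r • v}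

/-- The first Wong sequence `V^i` of the matrix pencil `sE - A`. -/
def wongV {L N : Type*} [Fintype N] (E A : Matrix L N ℝ) : ℕ → Set (N → ℝ)
  | 0 => Set.univ
  | i + 1 => {x | A *ᵥ x ∈ (fun v => E *ᵥ v) '' wongV E A i}

/-- The first Wong limit `V* = ⋂ V^i` of the matrix pencil `sE - A`. -/
def wongVstar {L N : Type*} [Fintype N] (E A : Matrix L N ℝ) : Set (N → ℝ) :=
  ⋂ i, wongV E A i

/-- The second Wong sequence `W^i` of the matrix pencil `sE - A`. -/
def wongW {L N : Type*} [Fintype N] (E A : Matrix L N ℝ) : ℕ → Set (N → ℝ)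
  | 0 => {0}
  | i + 1 => {x | E *ᵥ x ∈ (fun v => A *ᵥ v) '' wongW E A i}

/-- The second Wong limit `W* = ⋃ W^i` of the matrix pencil `sE - A`. -/
def wongWstar {L N : Type*} [Fintype N] (E A : Matrix L N ℝ) : Set (N → ℝ) :=
  ⋃ i, wongW E A i

/-- `M <_V 0` : the quadratic form of `M` is negative on `V \ {0}`. -/
def NegDefOn {ι : Type*} [Fintype ι] (M : Matrix ι ι ℝ) (V : Set (ι → ℝ)) : Prop :=
  ∀ v ∈ V, v ≠ 0 → v ⬝ᵥ (M *ᵥ v) < 0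

/-- `M >_V 0` : the quadratic form of `M` is positive on `V \ {0}`. -/
def PosDefOn {ι : Type*} [Fintype ι] (M : Matrix ι ι ℝ) (V : Set (ι → ℝ)) : Prop :=
  ∀ v ∈ V, v ≠ 0 → 0 < v ⬝ᵥ (M *ᵥ v)

/-- `M ≥_V 0` : the quadratic form of `M` is nonnegative on `V`. -/
def PosSemidefOn {ι : Type*} [Fintype ι] (M : Matrix ι ι ℝ) (V : Set (ι → ℝ)) : Prop :=
  ∀ v ∈ V, 0 ≤ v ⬝ᵥ (M *ᵥ v)

/-- With `κ = α‖J G_L‖/(1-‖F G_L‖)`: if `‖φ‖ ≤ ‖F(e₁ + G_L φ + e₂)‖` and `‖Fx‖ ≤ α‖Jx‖`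
for all `x`, then `‖J(e₁ + G_L φ)‖ ≤ (1+κ)‖J e₁‖ + κ‖J e₂‖`. -/

lemma vecEnorm_eq {ι : Type*} [Fintype ι] (x : ι → ℝ) :
    vecEnorm x = ‖(WithLp.equiv 2 (ι → ℝ)).symm x‖ := by
  rw [vecEnorm, EuclideanSpace.norm_eq]
  congr 1
  simp [dotProduct, Real.norm_eq_abs, sq_abs, pow_two]

lemma vecEnorm_nonneg' {ι : Type*} [Fintype ι] (x : ι → ℝ) : 0 ≤ vecEnorm x :=
  Real.sqrt_nonneg _

lemma vecEnorm_add_le {ι : Type*} [Fintype ι] (x y : ι → ℝ) :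
    vecEnorm (x + y) ≤ vecEnorm x + vecEnorm y := by
  simp only [vecEnorm_eq]
  rw [show (WithLp.equiv 2 (ι → ℝ)).symm (x + y)
      = (WithLp.equiv 2 (ι → ℝ)).symm x + (WithLp.equiv 2 (ι → ℝ)).symm y from rfl]
  exact norm_add_le _ _

lemma vecEnorm_mulVec_le {m n : Type*} [Fintype m] [Fintype n] [DecidableEq n]
    (M : Matrix m n ℝ) (x : n → ℝ) :
    vecEnorm (M *ᵥ x) ≤ matNorm M * vecEnorm x := by
  simp only [vecEnorm_eq, matNorm]
  have h := (LinearMap.toContinuousLinearMap (Matrix.toEuclideanLin M)).le_opNorm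
    ((WithLp.equiv 2 (n → ℝ)).symm x)
  simpa [Matrix.toEuclideanLin_apply] using h

lemma matNorm_nonneg {m n : Type*} [Fintype m] [Fintype n] [DecidableEq n]
    (M : Matrix m n ℝ) : 0 ≤ matNorm M := norm_nonneg _

theorem mixed_small_gain {j n qM qL : ℕ}
    (F : Matrix (Fin j) (Fin n) ℝ) (J : Matrix (Fin qM) (Fin n) ℝ)
    (GLm : Matrix (Fin n) (Fin qL) ℝ)
    (hFG : matNorm (F * GLm) < 1)
    (α : ℝ) (hα : 0 < α)
    (hFJ : ∀ x : Fin n → ℝ, vecEnorm (F *ᵥ x) ≤ α * vecEnorm (J *ᵥ x))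
    (e₁ e₂ : Fin n → ℝ) (φ : Fin qL → ℝ)
    (hφ : vecEnorm φ ≤ vecEnorm (F *ᵥ (e₁ + GLm *ᵥ φ + e₂))) :
    vecEnorm (J *ᵥ (e₁ + GLm *ᵥ φ)) ≤
      (1 + α * matNorm (J * GLm) / (1 - matNorm (F * GLm))) * vecEnorm (J *ᵥ e₁)
        + α * matNorm (J * GLm) / (1 - matNorm (F * GLm)) * vecEnorm (J *ᵥ e₂) := by
  set a := matNorm (F * GLm) with ha
  set b := matNorm (J * GLm) with hb
  have ha0 : 0 ≤ a := matNorm_nonneg _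
  have hb0 : 0 ≤ b := matNorm_nonneg _
  have h1a : 0 < 1 - a := by linarith
  have hsplit : F *ᵥ (e₁ + GLm *ᵥ φ + e₂) = (F *ᵥ (e₁ + e₂)) + (F * GLm) *ᵥ φ := by
    rw [← Matrix.mulVec_mulVec]
    simp [Matrix.mulVec_add]
    abel
  have hφ1 : vecEnorm φ ≤ vecEnorm (F *ᵥ e₁) + vecEnorm (F *ᵥ e₂) + a * vecEnorm φ := by
    calc vecEnorm φ ≤ vecEnorm (F *ᵥ (e₁ + e₂) + (F * GLm) *ᵥ φ) := by rw [← hsplit]; exact hφ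
      _ ≤ vecEnorm (F *ᵥ (e₁ + e₂)) + vecEnorm ((F * GLm) *ᵥ φ) := vecEnorm_add_le _ _
      _ ≤ vecEnorm (F *ᵥ e₁) + vecEnorm (F *ᵥ e₂) + a * vecEnorm φ := by
          rw [Matrix.mulVec_add]
          have := vecEnorm_add_le (F *ᵥ e₁) (F *ᵥ e₂)
          have := vecEnorm_mulVec_le (F * GLm) φ
          linarith
  have hφ2 : vecEnorm φ ≤ α * (vecEnorm (J *ᵥ e₁) + vecEnorm (J *ᵥ e₂)) + a * vecEnorm φ := by
    have h1 := hFJ e₁; have h2 := hFJ e₂; linarith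
  have hφ3 : vecEnorm φ ≤ α * (vecEnorm (J *ᵥ e₁) + vecEnorm (J *ᵥ e₂)) / (1 - a) := by
    rw [le_div_iff₀ h1a]; ring_nf; ring_nf at hφ2; linarith
  have hmain : vecEnorm (J *ᵥ (e₁ + GLm *ᵥ φ)) ≤ vecEnorm (J *ᵥ e₁) + b * vecEnorm φ := by
    rw [Matrix.mulVec_add]
    have h1 := vecEnorm_add_le (J *ᵥ e₁) (J *ᵥ (GLm *ᵥ φ))
    have h2 : vecEnorm (J *ᵥ (GLm *ᵥ φ)) ≤ b * vecEnorm φ := by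
      rw [Matrix.mulVec_mulVec]; exact vecEnorm_mulVec_le _ _
    linarith
  have hκ : b * vecEnorm φ ≤ b * (α * (vecEnorm (J *ᵥ e₁) + vecEnorm (J *ᵥ e₂)) / (1 - a)) :=
    mul_le_mul_of_nonneg_left hφ3 hb0
  have heq : b * (α * (vecEnorm (J *ᵥ e₁) + vecEnorm (J *ᵥ e₂)) / (1 - a))
      = α * b / (1 - a) * vecEnorm (J *ᵥ e₁) + α * b / (1 - a) * vecEnorm (J *ᵥ e₂) := by
    field_simp
  linarith [hmain, hκ, heq.le, heq.ge]
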